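/- Let (V, ω₁), (W, ω₂), (U, ω₃) be finite-dimensional real symplectic vector spaces, L₁ ⊆ V̄ × W and L₂ ⊆ W̄ × U Lagrangian subspaces. If L₁ × L₂ is transverse to V̄ × Δ(W) × U inside V̄ × W × W̄ × U (i.e. their sum is the whole space), then the composition L₂ ∘ L₁ := {(v, u) : ∃ w ∈ W, (v, w) ∈ L₁ and (w, u) ∈ L₂} is a Lagrangian subspace of V̄ × U. -/

import Mathlib

section LagAux

open LinearMap (BilinForm)

variable {V W U : Type*} [AddCommGroup V] [Module ℝ V]
    [AddCommGroup W] [Module ℝ W] [AddCommGroup U] [Module ℝ U]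

/-- The big symplectic form on `(V × W) × (W × U)`. -/
noncomputable def lagBigForm (ω₁ : V →ₗ[ℝ] V →ₗ[ℝ] ℝ) (ω₂ : W →ₗ[ℝ] W →ₗ[ℝ] ℝ)
    (ω₃ : U →ₗ[ℝ] U →ₗ[ℝ] ℝ) : BilinForm ℝ ((V × W) × (W × U)) :=
  LinearMap.mk₂ ℝ
    (fun x y => -(ω₁ x.1.1 y.1.1) + ω₂ x.1.2 y.1.2 + (-(ω₂ x.2.1 y.2.1) + ω₃ x.2.2 y.2.2))
    (fun x y z => by simp; ring)
    (fun c x y => by simp; ring)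
    (fun x y z => by simp; ring)
    (fun c x y => by simp; ring)

@[simp] theorem lagBigForm_apply (ω₁ : V →ₗ[ℝ] V →ₗ[ℝ] ℝ) (ω₂ : W →ₗ[ℝ] W →ₗ[ℝ] ℝ)
    (ω₃ : U →ₗ[ℝ] U →ₗ[ℝ] ℝ) (x y : (V × W) × (W × U)) :
    lagBigForm ω₁ ω₂ ω₃ x y =
      -(ω₁ x.1.1 y.1.1) + ω₂ x.1.2 y.1.2 + (-(ω₂ x.2.1 y.2.1) + ω₃ x.2.2 y.2.2) := rfl

/-- For a nondegenerate reflexive bilinear form on a finite-dimensional space,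
the orthogonal of an intersection is the sup of the orthogonals. -/
theorem lag_orthogonal_inf {E : Type*} [AddCommGroup E] [Module ℝ E] [FiniteDimensional ℝ E]
    (B : BilinForm ℝ E) (hnd : B.Nondegenerate) (hrefl : B.IsRefl) (A C : Submodule ℝ E) :
    B.orthogonal (A ⊓ C) = B.orthogonal A ⊔ B.orthogonal C := by
  have key : B.orthogonal (B.orthogonal A ⊔ B.orthogonal C) = A ⊓ C := by
    apply le_antisymm
    · exact le_inf
        (le_trans (B.orthogonal_le le_sup_left)
          (le_of_eq (B.orthogonal_orthogonal hnd hrefl A)))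
        (le_trans (B.orthogonal_le le_sup_right)
          (le_of_eq (B.orthogonal_orthogonal hnd hrefl C)))
    · intro x hx n hn
      obtain ⟨a, ha, c, hc, rfl⟩ := Submodule.mem_sup.1 hn
      have h1 : B a x = 0 := hrefl _ _ (ha x hx.1)
      have h2 : B c x = 0 := hrefl _ _ (hc x hx.2)
      show B (a + c) x = 0
      rw [map_add, LinearMap.add_apply, h1, h2, add_zero]
  calc B.orthogonal (A ⊓ C)
      = B.orthogonal (B.orthogonal (B.orthogonal A ⊔ B.orthogonal C)) := by rw [key]
    _ = B.orthogonal A ⊔ B.orthogonal C := B.orthogonal_orthogonal hnd hrefl _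

end LagAux
def IsLagrangian {V : Type*} [AddCommGroup V] [Module ℝ V]
    (ω : V → V → ℝ) (L : Submodule ℝ V) : Prop :=
  ∀ v, v ∈ L ↔ ∀ u ∈ L, ω u v = 0

/-- The product symplectic form `ω₁ ⊕ ω₂` on `V × W`. -/
def prodForm {V W : Type*} (ω : V → V → ℝ) (η : W → W → ℝ) :
    V × W → V × W → ℝ := fun p q => ω p.1 q.1 + η p.2 q.2

/-- Composition of linear correspondences `L₁ ⊆ V × W` and `L₂ ⊆ W × U`:
`L₂ ∘ L₁ = {(v, u) : ∃ w, (v, w) ∈ L₁ ∧ (w, u) ∈ L₂}`. -/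
def lagComp {V W U : Type*} [AddCommGroup V] [Module ℝ V] [AddCommGroup W] [Module ℝ W]
    [AddCommGroup U] [Module ℝ U]
    (L₁ : Submodule ℝ (V × W)) (L₂ : Submodule ℝ (W × U)) : Submodule ℝ (V × U) where
  carrier := {p | ∃ w, (p.1, w) ∈ L₁ ∧ (w, p.2) ∈ L₂}
  zero_mem' := ⟨0, L₁.zero_mem, L₂.zero_mem⟩
  add_mem' := by
    rintro x y ⟨w, h1, h2⟩ ⟨w', h1', h2'⟩
    exact ⟨w + w', L₁.add_mem h1 h1', L₂.add_mem h2 h2'⟩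
  smul_mem' := by
    rintro c x ⟨w, h1, h2⟩
    exact ⟨c • w, L₁.smul_mem c h1, L₂.smul_mem c h2⟩

/-- The subspace `V × Δ(W) × U` of `(V × W) × (W × U)`, i.e. the pairs whose two
middle coordinates agree. -/
def midDiag (V W U : Type*) [AddCommGroup V] [Module ℝ V] [AddCommGroup W] [Module ℝ W]
    [AddCommGroup U] [Module ℝ U] : Submodule ℝ ((V × W) × (W × U)) where
  carrier := {p | p.1.2 = p.2.1}
  zero_mem' := rfl
  add_mem' := by
    intro x y hx hy
    exact congrArg₂ (· + ·) hx hy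
  smul_mem' := by
    intro c x hx
    exact congrArg (c • ·) hx

/-- Transverse composition of Lagrangian correspondences is Lagrangian:
if `L₁ ⊆ V̄ × W` and `L₂ ⊆ W̄ × U` are Lagrangian and `L₁ × L₂` is transverse to
`V̄ × Δ(W) × U` inside `V̄ × W × W̄ × U`, then `L₂ ∘ L₁` is a Lagrangian subspace
of `V̄ × U`. -/
theorem lagComp_isLagrangian_of_transverse
    {V W U : Type*} [AddCommGroup V] [Module ℝ V] [FiniteDimensional ℝ V]
    [AddCommGroup W] [Module ℝ W] [FiniteDimensional ℝ W]
    [AddCommGroup U] [Module ℝ U] [FiniteDimensional ℝ U]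
    (ω₁ : V →ₗ[ℝ] V →ₗ[ℝ] ℝ) (ω₂ : W →ₗ[ℝ] W →ₗ[ℝ] ℝ) (ω₃ : U →ₗ[ℝ] U →ₗ[ℝ] ℝ)
    (halt₁ : ∀ v, ω₁ v v = 0) (hnd₁ : ∀ v, (∀ u, ω₁ u v = 0) → v = 0)
    (halt₂ : ∀ v, ω₂ v v = 0) (hnd₂ : ∀ v, (∀ u, ω₂ u v = 0) → v = 0)
    (halt₃ : ∀ v, ω₃ v v = 0) (hnd₃ : ∀ v, (∀ u, ω₃ u v = 0) → v = 0)
    (L₁ : Submodule ℝ (V × W)) (L₂ : Submodule ℝ (W × U))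
    (hL₁ : IsLagrangian (prodForm (fun u v => -(ω₁ u v)) (fun u v => ω₂ u v)) L₁)
    (hL₂ : IsLagrangian (prodForm (fun u v => -(ω₂ u v)) (fun u v => ω₃ u v)) L₂)
    (htrans : L₁.prod L₂ ⊔ midDiag V W U = ⊤) :
    IsLagrangian (prodForm (fun u v => -(ω₁ u v)) (fun u v => ω₃ u v)) (lagComp L₁ L₂) := by
  classical
  have skew₁ : ∀ a b, ω₁ a b = -(ω₁ b a) := by
    intro a b
    have h := halt₁ (a + b)
    simp [map_add, halt₁] at h
    linarith
  have skew₂ : ∀ a b, ω₂ a b = -(ω₂ b a) := by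
    intro a b
    have h := halt₂ (a + b)
    simp [map_add, halt₂] at h
    linarith
  have skew₃ : ∀ a b, ω₃ a b = -(ω₃ b a) := by
    intro a b
    have h := halt₃ (a + b)
    simp [map_add, halt₃] at h
    linarith
  set Ω := lagBigForm ω₁ ω₂ ω₃ with hΩdef
  have hrefl : Ω.IsRefl := by
    intro x y h
    simp only [hΩdef, lagBigForm_apply] at h ⊢
    rw [skew₁ y.1.1 x.1.1, skew₂ y.1.2 x.1.2, skew₂ y.2.1 x.2.1, skew₃ y.2.2 x.2.2]
    linarith
  have hnd : Ω.Nondegenerate := by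
    refine (LinearMap.IsRefl.nondegenerate_iff_separatingLeft hrefl).2 ?_
    intro x hx
    have h11 : x.1.1 = 0 := hnd₁ _ (fun u => by
      have h := hx ((u, 0), (0, 0))
      simp only [hΩdef, lagBigForm_apply, map_zero, add_zero, neg_zero, zero_add] at h
      rw [skew₁ u x.1.1]
      linarith [h])
    have h12 : x.1.2 = 0 := hnd₂ _ (fun u => by
      have h := hx ((0, u), (0, 0))
      simp only [hΩdef, lagBigForm_apply, map_zero, add_zero, neg_zero, zero_add] at h
      rw [skew₂ u x.1.2]
      linarith [h])
    have h21 : x.2.1 = 0 := hnd₂ _ (fun u => by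
      have h := hx ((0, 0), (u, 0))
      simp only [hΩdef, lagBigForm_apply, map_zero, add_zero, neg_zero, zero_add] at h
      rw [skew₂ u x.2.1]
      linarith [h])
    have h22 : x.2.2 = 0 := hnd₃ _ (fun u => by
      have h := hx ((0, 0), (0, u))
      simp only [hΩdef, lagBigForm_apply, map_zero, add_zero, neg_zero, zero_add] at h
      rw [skew₃ u x.2.2]
      linarith [h])
    exact Prod.ext (Prod.ext h11 h12) (Prod.ext h21 h22)
  -- the product of the two Lagrangians is Lagrangian for Ω
  have hP : Ω.orthogonal (L₁.prod L₂) = L₁.prod L₂ := by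
    apply le_antisymm
    · intro z hz
      refine Submodule.mem_prod.2 ⟨(hL₁ z.1).2 fun u hu => ?_, (hL₂ z.2).2 fun u hu => ?_⟩
      · have h := hz (u, 0) (Submodule.mem_prod.2 ⟨hu, L₂.zero_mem⟩)
        have h' : -(ω₁ u.1 z.1.1) + ω₂ u.2 z.1.2 +
            (-(ω₂ (0 : W × U).1 z.2.1) + ω₃ (0 : W × U).2 z.2.2) = 0 := h
        show -(ω₁ u.1 z.1.1) + ω₂ u.2 z.1.2 = 0
        have hz1 : ω₂ (0 : W × U).1 z.2.1 = 0 := by simp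
        have hz2 : ω₃ (0 : W × U).2 z.2.2 = 0 := by simp
        linarith
      · have h := hz (0, u) (Submodule.mem_prod.2 ⟨L₁.zero_mem, hu⟩)
        have h' : -(ω₁ (0 : V × W).1 z.1.1) + ω₂ (0 : V × W).2 z.1.2 +
            (-(ω₂ u.1 z.2.1) + ω₃ u.2 z.2.2) = 0 := h
        show -(ω₂ u.1 z.2.1) + ω₃ u.2 z.2.2 = 0
        have hz1 : ω₁ (0 : V × W).1 z.1.1 = 0 := by simp
        have hz2 : ω₂ (0 : V × W).2 z.1.2 = 0 := by simp
        linarith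
    · intro z hz n hn
      obtain ⟨hn1, hn2⟩ := Submodule.mem_prod.1 hn
      obtain ⟨hz1, hz2⟩ := Submodule.mem_prod.1 hz
      have e1 : -(ω₁ n.1.1 z.1.1) + ω₂ n.1.2 z.1.2 = 0 := (hL₁ z.1).1 hz1 n.1 hn1
      have e2 : -(ω₂ n.2.1 z.2.1) + ω₃ n.2.2 z.2.2 = 0 := (hL₂ z.2).1 hz2 n.2 hn2
      show Ω n z = 0
      simp only [hΩdef, lagBigForm_apply]
      linarith
  -- structure of the orthogonal of the middle diagonal
  have hC : ∀ z ∈ Ω.orthogonal (midDiag V W U), z.1.1 = 0 ∧ z.2.2 = 0 ∧ z.1.2 = z.2.1 := by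
    intro z hz
    refine ⟨hnd₁ _ (fun y => ?_), hnd₃ _ (fun y => ?_), ?_⟩
    · have h := hz ((y, 0), (0, 0)) rfl
      have h' : -(ω₁ y z.1.1) + ω₂ (0 : W) z.1.2 +
          (-(ω₂ (0 : W) z.2.1) + ω₃ (0 : U) z.2.2) = 0 := h
      have a1 : ω₂ (0 : W) z.1.2 = 0 := by simp
      have a2 : ω₂ (0 : W) z.2.1 = 0 := by simp
      have a3 : ω₃ (0 : U) z.2.2 = 0 := by simp
      linarith
    · have h := hz ((0, 0), (0, y)) rfl
      have h' : -(ω₁ (0 : V) z.1.1) + ω₂ (0 : W) z.1.2 +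
          (-(ω₂ (0 : W) z.2.1) + ω₃ y z.2.2) = 0 := h
      have a1 : ω₁ (0 : V) z.1.1 = 0 := by simp
      have a2 : ω₂ (0 : W) z.1.2 = 0 := by simp
      have a3 : ω₂ (0 : W) z.2.1 = 0 := by simp
      linarith
    · have key : ∀ y : W, ω₂ y (z.1.2 - z.2.1) = 0 := fun y => by
        have h := hz ((0, y), (y, 0)) rfl
        have h' : -(ω₁ (0 : V) z.1.1) + ω₂ y z.1.2 +
            (-(ω₂ y z.2.1) + ω₃ (0 : U) z.2.2) = 0 := h
        have a1 : ω₁ (0 : V) z.1.1 = 0 := by simp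
        have a3 : ω₃ (0 : U) z.2.2 = 0 := by simp
        have : (ω₂ y) (z.1.2 - z.2.1) = ω₂ y z.1.2 - ω₂ y z.2.1 := map_sub _ _ _
        rw [this]
        linarith
      have := hnd₂ _ key
      exact sub_eq_zero.1 this
  -- now prove the main statement
  intro p
  constructor
  · rintro ⟨w, h1, h2⟩ q ⟨w', hq1, hq2⟩
    have e1 : -(ω₁ q.1 p.1) + ω₂ w' w = 0 := (hL₁ (p.1, w)).1 h1 (q.1, w') hq1
    have e2 : -(ω₂ w' w) + ω₃ q.2 p.2 = 0 := (hL₂ (w, p.2)).1 h2 (w', q.2) hq2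
    show -(ω₁ q.1 p.1) + ω₃ q.2 p.2 = 0
    linarith
  · intro hp
    have hzmem : ((p.1, (0 : W)), ((0 : W), p.2)) ∈
        Ω.orthogonal ((L₁.prod L₂) ⊓ midDiag V W U) := by
      intro n hn
      obtain ⟨hnP, hnC⟩ := hn
      obtain ⟨hn1, hn2⟩ := Submodule.mem_prod.1 hnP
      have hmid : n.1.2 = n.2.1 := hnC
      have hcomp : (n.1.1, n.2.2) ∈ lagComp L₁ L₂ :=
        ⟨n.1.2, hn1, by rw [hmid]; exact hn2⟩
      have e : -(ω₁ n.1.1 p.1) + ω₃ n.2.2 p.2 = 0 := hp (n.1.1, n.2.2) hcomp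
      show -(ω₁ n.1.1 p.1) + ω₂ n.1.2 (0 : W) +
          (-(ω₂ n.2.1 (0 : W)) + ω₃ n.2.2 p.2) = 0
      have a1 : ω₂ n.1.2 (0 : W) = 0 := by simp
      have a2 : ω₂ n.2.1 (0 : W) = 0 := by simp
      linarith
    rw [lag_orthogonal_inf Ω hnd hrefl, hP] at hzmem
    obtain ⟨y, hy, c, hc, hsum⟩ := Submodule.mem_sup.1 hzmem
    obtain ⟨hc1, hc2, hc3⟩ := hC c hc
    obtain ⟨hy1, hy2⟩ := Submodule.mem_prod.1 hy
    have e11 : y.1.1 + c.1.1 = p.1 := congrArg (fun t => t.1.1) hsum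
    have e12 : y.1.2 + c.1.2 = 0 := congrArg (fun t => t.1.2) hsum
    have e21 : y.2.1 + c.2.1 = 0 := congrArg (fun t => t.2.1) hsum
    have e22 : y.2.2 + c.2.2 = p.2 := congrArg (fun t => t.2.2) hsum
    have hy11 : y.1.1 = p.1 := by rw [hc1, add_zero] at e11; exact e11
    have hy22 : y.2.2 = p.2 := by rw [hc2, add_zero] at e22; exact e22
    have hyw : y.1.2 = y.2.1 := by
      have a1 : y.1.2 = -c.1.2 := eq_neg_of_add_eq_zero_left e12
      have a2 : y.2.1 = -c.2.1 := eq_neg_of_add_eq_zero_left e21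
      rw [a1, a2, hc3]
    refine ⟨y.1.2, ?_, ?_⟩
    · rw [← hy11]; exact hy1
    · rw [hyw, ← hy22]; exact hy2
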